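/- Let X be a compact, locally connected, metrizable topological space and let G be a countable group acting by homeomorphisms on X such that the orbit space X/G is Hausdorff. Then every sequence (g_n) in G admits a subsequence (g_{n_k}) and a homeomorphism h : X → X such that the continuous maps x ↦ g_{n_k}•x converge to h in the compact-open topology on C(X, X) as k → ∞. -/

import Mathlib

open Filter Topology Metric Set

theorem orbit_isClosed' {G X : Type*} [Group G] [TopologicalSpace X] [MulAction G X]
    [T2Space (Quotient (MulAction.orbitRel G X))] (x : X) :
    IsClosed (MulAction.orbit G x) := by
  have h : MulAction.orbit G x =
      Quotient.mk (MulAction.orbitRel G X) ⁻¹' {Quotient.mk _ x} := by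
    ext z
    simp only [mem_preimage, mem_singleton_iff, Quotient.eq]
    exact (MulAction.orbitRel_apply).symm
  rw [h]
  exact (isClosed_singleton).preimage continuous_quotient_mk'

theorem smul_equicontinuous' {G X : Type*} [Group G] [Countable G] [MetricSpace X]
    [CompactSpace X] [LocallyConnectedSpace X] [MulAction G X] [ContinuousConstSMul G X]
    [T2Space (Quotient (MulAction.orbitRel G X))] :
    Equicontinuous (fun g : G => fun x : X => g • x) := by
  intro x
  rw [Metric.equicontinuousAt_iff]
  by_contra hc
  push_neg at hc
  obtain ⟨ε, εpos, hε⟩ := hc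
  -- the orbit of x
  set F := MulAction.orbit G x with hF
  have hFclosed : IsClosed F := orbit_isClosed' x
  have hFne : x ∈ F := MulAction.mem_orbit_self x
  have hFcount : F.Countable := countable_range _
  -- choose connected neighborhoods and bad group elements
  have key : ∀ n : ℕ, ∃ (U : Set X) (y : X) (gg : G),
      IsOpen U ∧ IsConnected U ∧ x ∈ U ∧ U ⊆ ball x (1/(n+1)) ∧ y ∈ U ∧
        ε ≤ dist (gg • x) (gg • y) := by
    intro n
    obtain ⟨U, hUsub, hUopen, hxU, hUconn⟩ :=
      locallyConnectedSpace_iff_subsets_isOpen_isConnected.mp ‹_› x (ball x (1/(n+1)))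
        (ball_mem_nhds _ (by positivity))
    obtain ⟨δ, δpos, hδ⟩ := Metric.isOpen_iff.mp hUopen x hxU
    obtain ⟨y, hy, gg, hgg⟩ := hε δ δpos
    exact ⟨U, y, gg, hUopen, hUconn, hxU, hUsub, hδ (by rwa [mem_ball]), hgg⟩
  choose U y gg hUopen hUconn hxU hUsub hyU hdist using key
  -- a limit point of the images of x
  obtain ⟨a, ψ, hψ, ha⟩ := CompactSpace.tendsto_subseq (fun n => gg n • x)
  have haF : a ∈ F :=
    hFclosed.mem_of_tendsto ha (Eventually.of_forall fun n => ⟨gg (ψ n), rfl⟩)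
  -- choose a radius avoiding countable distance set
  set D := (fun z => dist z a) '' F with hD
  have hDcount : D.Countable := hFcount.image _
  have hIoo : ¬ (Ioo (0:ℝ) (ε/2)).Countable := by
    intro h
    have h1 : (Cardinal.mk (Ioo (0:ℝ) (ε/2))) = Cardinal.continuum :=
      Cardinal.mk_Ioo_real (by linarith)
    rw [← Cardinal.le_aleph0_iff_set_countable] at h
    rw [h1] at h
    exact absurd h (not_le.mpr Cardinal.aleph0_lt_continuum)
  obtain ⟨r, hrIoo, hrD⟩ := Set.not_subset.mp (fun hsub => hIoo (hDcount.mono hsub))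
  obtain ⟨hr0, hrε⟩ := hrIoo
  -- upper semicontinuity of orbits
  have usc : ∀ η > (0:ℝ), ∀ᶠ n in atTop, ∀ u ∈ U n, infDist (gg n • u) F < η := by
    by_contra hco
    push_neg at hco
    obtain ⟨η, ηpos, hη⟩ := hco
    have hη' : ∃ᶠ n in atTop, ∃ u ∈ U n, η ≤ infDist (gg n • u) F := by
      exact hη
    obtain ⟨σ, hσ, hσ'⟩ := Filter.extraction_of_frequently_atTop hη'
    choose u hu hinf using hσ'
    obtain ⟨p, τ, hτ, hp⟩ := CompactSpace.tendsto_subseq (fun m => gg (σ m) • u m)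
    -- u ∘ τ → x
    have hux : Tendsto (fun m => u (τ m)) atTop (𝓝 x) := by
      rw [tendsto_iff_dist_tendsto_zero]
      apply squeeze_zero (fun m => dist_nonneg)
        (g := fun m : ℕ => 1/(m+1))
      · intro m
        have h1 : u (τ m) ∈ ball x (1/(σ (τ m)+1)) := hUsub _ (hu (τ m))
        have h2 : (1:ℝ)/(σ (τ m)+1) ≤ 1/(m+1) := by
          apply one_div_le_one_div_of_le (by positivity)
          have : m ≤ σ (τ m) := le_trans (hτ.le_apply) (hσ.le_apply)
          exact_mod_cast by exact_mod_cast Nat.add_le_add_right this 1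
        exact le_trans (le_of_lt (mem_ball.mp h1)) h2
      · exact tendsto_one_div_add_atTop_nhds_zero_nat
    -- closed orbit relation
    have hclosed : IsClosed {pq : X × X |
        Quotient.mk (MulAction.orbitRel G X) pq.1 = Quotient.mk _ pq.2} :=
      isClosed_eq (continuous_quotient_mk'.comp continuous_fst)
        (continuous_quotient_mk'.comp continuous_snd)
    have hmem : ∀ m, ((fun m => (u (τ m), gg (σ (τ m)) • u (τ m))) m) ∈
        {pq : X × X | Quotient.mk (MulAction.orbitRel G X) pq.1 = Quotient.mk _ pq.2} := by
      intro m
      exact (Quotient.eq.mpr (MulAction.orbitRel_apply.mpr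
        (MulAction.mem_orbit _ _))).symm
    have hlim : Tendsto (fun m => (u (τ m), gg (σ (τ m)) • u (τ m))) atTop (𝓝 (x, p)) :=
      hux.prodMk_nhds hp
    have hxp : Quotient.mk (MulAction.orbitRel G X) x = Quotient.mk _ p :=
      hclosed.mem_of_tendsto hlim (Eventually.of_forall hmem)
    have hpF : p ∈ F := MulAction.orbitRel_apply.mp (Quotient.eq.mp hxp.symm)
    have h0 : infDist p F = 0 := infDist_zero_of_mem hpF
    have hge : η ≤ infDist p F := by
      have : Tendsto (fun m => infDist (gg (σ (τ m)) • u (τ m)) F) atTop (𝓝 (infDist p F)) :=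
        ((continuous_infDist_pt F).tendsto p).comp hp
      exact ge_of_tendsto this (Eventually.of_forall fun m => hinf (τ m))
    linarith
  -- build points on the sphere of radius r around a with small infDist
  have build : ∀ m : ℕ, ∃ s : X, dist s a = r ∧ infDist s F < 1/(m+1) := by
    intro m
    have ev1 : ∀ᶠ k in atTop, ∀ u' ∈ U (ψ k), infDist (gg (ψ k) • u') F < 1/(m+1) :=
      (hψ.tendsto_atTop).eventually (usc (1/(m+1)) (by positivity))
    have ev2 : ∀ᶠ k in atTop, dist (gg (ψ k) • x) a < r := by
      have := Metric.tendsto_nhds.mp ha r hr0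
      exact this
    obtain ⟨k, hk1, hk2⟩ := (ev1.and ev2).exists
    set C := (fun z => gg (ψ k) • z) '' (U (ψ k)) with hC
    have hCconn : IsConnected C :=
      (hUconn (ψ k)).image _ (continuous_const_smul _).continuousOn
    have hp1 : gg (ψ k) • x ∈ C := ⟨x, hxU _, rfl⟩
    have hp2 : gg (ψ k) • y (ψ k) ∈ C := ⟨y (ψ k), hyU _, rfl⟩
    have hd2 : r ≤ dist (gg (ψ k) • y (ψ k)) a := by
      have htri := dist_triangle (gg (ψ k) • x) (gg (ψ k) • y (ψ k)) a
      have h1 : ε ≤ dist (gg (ψ k) • x) (gg (ψ k) • y (ψ k)) := hdist (ψ k)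
      have h2 := dist_comm (gg (ψ k) • y (ψ k)) a
      linarith [dist_triangle (gg (ψ k) • x) a (gg (ψ k) • y (ψ k)),
        dist_comm a (gg (ψ k) • y (ψ k))]
    have hiv : r ∈ (fun z => dist z a) '' C := by
      apply hCconn.isPreconnected.intermediate_value hp1 hp2
        (Continuous.continuousOn (by continuity))
      exact ⟨le_of_lt hk2, hd2⟩
    obtain ⟨s, hsC, hsr⟩ := hiv
    obtain ⟨u', hu', rfl⟩ := hsC
    exact ⟨gg (ψ k) • u', hsr, hk1 u' hu'⟩
  choose s hs1 hs2 using build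
  obtain ⟨sl, τ', hτ', hsl⟩ := CompactSpace.tendsto_subseq s
  have hdl : dist sl a = r := by
    have h1 : Tendsto (fun m => dist (s (τ' m)) a) atTop (𝓝 (dist sl a)) :=
      ((continuous_id.dist continuous_const).tendsto sl).comp hsl
    have h2 : (fun m => dist (s (τ' m)) a) = fun _ => r := funext fun m => hs1 (τ' m)
    rw [h2] at h1
    exact tendsto_nhds_unique h1 tendsto_const_nhds
  have hil : infDist sl F = 0 := by
    have h1 : Tendsto (fun m => infDist (s (τ' m)) F) atTop (𝓝 (infDist sl F)) :=
      ((continuous_infDist_pt F).tendsto sl).comp hsl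
    have h2 : Tendsto (fun m : ℕ => (1:ℝ)/(m+1)) atTop (𝓝 0) :=
      tendsto_one_div_add_atTop_nhds_zero_nat
    have hle : infDist sl F ≤ 0 := by
      apply le_of_tendsto_of_tendsto h1 h2
      apply Eventually.of_forall
      intro m
      show infDist (s (τ' m)) F ≤ 1/(m+1)
      apply le_of_lt
      calc infDist (s (τ' m)) F < 1/(τ' m + 1) := hs2 (τ' m)
        _ ≤ 1/(m+1) := by
          apply one_div_le_one_div_of_le (by positivity)
          exact_mod_cast Nat.add_le_add_right hτ'.le_apply 1
    exact le_antisymm hle infDist_nonneg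
  have hslF : sl ∈ F := by
    rw [← hFclosed.closure_eq]
    exact (mem_closure_iff_infDist_zero ⟨x, hFne⟩).mpr hil
  exact hrD ⟨sl, hslF, hdl⟩

theorem part2 {G X : Type*} [Group G] [Countable G] [MetricSpace X]
    [CompactSpace X] [LocallyConnectedSpace X] [MulAction G X] [ContinuousConstSMul G X]
    (equic : Equicontinuous (fun g : G => fun x : X => g • x))
    (g : ℕ → G) :
    ∃ φ : ℕ → ℕ, StrictMono φ ∧ ∃ h : X ≃ₜ X,
      Filter.Tendsto
        (fun k : ℕ => ((Homeomorph.smul (g (φ k)) : X ≃ₜ X) : C(X, X)))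
        Filter.atTop (nhds (h : C(X, X))) := by
  -- the family as continuous maps
  set Smap : G → C(X, X) := fun gg => ⟨fun x => gg • x, continuous_const_smul gg⟩ with hSmap
  -- closure of the range in the product topology
  set Cl : Set (X → X) := closure (range (fun gg : G => fun x : X => gg • x)) with hCl
  have hClequi : Cl.Equicontinuous := by
    apply Set.Equicontinuous.closure
    exact equicontinuous_iff_range.mp equic
  have hClcomp : IsCompact Cl := isClosed_closure.isCompact
  set S : Set C(X, X) := {f | ⇑f ∈ Cl} with hS
  have himg : ContinuousMap.toFun '' S = Cl := by
    apply Subset.antisymm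
    · rintro _ ⟨f, hf, rfl⟩; exact hf
    · intro f hf
      exact ⟨⟨f, hClequi.continuous_of_mem hf⟩, hf, rfl⟩
  have hScomp : IsCompact S := by
    apply ArzelaAscoli.isCompact_of_equicontinuous S (himg ▸ hClcomp)
    intro x
    have h1 := hClequi x
    intro V hV
    filter_upwards [h1 V hV] with z hz i
    exact hz ⟨⇑i.1, i.2⟩
  have hmem : ∀ gg : G, Smap gg ∈ S := fun gg => subset_closure ⟨gg, rfl⟩
  -- first subsequence : convergence of the maps
  obtain ⟨f, hfS, φ₁, hφ₁, hf⟩ :=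
    hScomp.tendsto_subseq (x := fun k => Smap (g k)) (fun k => hmem (g k))
  -- second subsequence : convergence of the inverse maps
  obtain ⟨f', hf'S, φ₂, hφ₂, hf'⟩ :=
    hScomp.tendsto_subseq (x := fun k => Smap ((g (φ₁ k))⁻¹)) (fun k => hmem _)
  set φ : ℕ → ℕ := φ₁ ∘ φ₂ with hφdef
  have hφ : StrictMono φ := hφ₁.comp hφ₂
  have hff : Tendsto (fun k => Smap (g (φ k))) atTop (𝓝 f) :=
    hf.comp hφ₂.tendsto_atTop
  have hff' : Tendsto (fun k => Smap ((g (φ k))⁻¹)) atTop (𝓝 f') := hf'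
  -- pointwise convergence
  have hpt : ∀ z : X, Tendsto (fun k => g (φ k) • z) atTop (𝓝 (f z)) := fun z =>
    ((continuous_eval_const z).tendsto f).comp hff
  have hpt' : ∀ z : X, Tendsto (fun k => (g (φ k))⁻¹ • z) atTop (𝓝 (f' z)) := fun z =>
    ((continuous_eval_const z).tendsto f').comp hff'
  -- f ∘ f' = id
  have hleft : ∀ z : X, f (f' z) = z := by
    intro z
    rw [← dist_le_zero]
    refine le_of_forall_pos_le_add (fun ε' hε' => ?_)
    rw [zero_add]
    apply le_of_lt
    obtain ⟨δ, δpos, hδ⟩ := Metric.equicontinuousAt_iff.mp (equic (f' z)) (ε'/2)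
      (by linarith)
    have ev1 : ∀ᶠ k in atTop, dist ((g (φ k))⁻¹ • z) (f' z) < δ :=
      (Metric.tendsto_nhds.mp (hpt' z)) δ δpos
    have ev2 : ∀ᶠ k in atTop, dist (g (φ k) • (f' z)) (f (f' z)) < ε'/2 :=
      (Metric.tendsto_nhds.mp (hpt (f' z))) (ε'/2) (by linarith)
    obtain ⟨k, hk1, hk2⟩ := (ev1.and ev2).exists
    have h3 : dist (g (φ k) • (f' z)) (g (φ k) • ((g (φ k))⁻¹ • z)) < ε'/2 :=
      hδ _ hk1 (g (φ k))
    have h4 : g (φ k) • ((g (φ k))⁻¹ • z) = z := smul_inv_smul _ _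
    rw [h4] at h3
    calc dist (f (f' z)) z ≤ dist (f (f' z)) (g (φ k) • (f' z)) + dist (g (φ k) • (f' z)) z :=
          dist_triangle _ _ _
      _ < ε'/2 + ε'/2 := by rw [dist_comm (f (f' z))]; exact add_lt_add hk2 h3
      _ = ε' := by ring
  -- f' ∘ f = id
  have hright : ∀ z : X, f' (f z) = z := by
    intro z
    rw [← dist_le_zero]
    refine le_of_forall_pos_le_add (fun ε' hε' => ?_)
    rw [zero_add]
    apply le_of_lt
    obtain ⟨δ, δpos, hδ⟩ := Metric.equicontinuousAt_iff.mp (equic (f z)) (ε'/2)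
      (by linarith)
    have ev1 : ∀ᶠ k in atTop, dist (g (φ k) • z) (f z) < δ :=
      (Metric.tendsto_nhds.mp (hpt z)) δ δpos
    have ev2 : ∀ᶠ k in atTop, dist ((g (φ k))⁻¹ • (f z)) (f' (f z)) < ε'/2 :=
      (Metric.tendsto_nhds.mp (hpt' (f z))) (ε'/2) (by linarith)
    obtain ⟨k, hk1, hk2⟩ := (ev1.and ev2).exists
    have h3 : dist ((g (φ k))⁻¹ • (f z)) ((g (φ k))⁻¹ • (g (φ k) • z)) < ε'/2 :=
      hδ _ hk1 ((g (φ k))⁻¹)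
    have h4 : (g (φ k))⁻¹ • (g (φ k) • z) = z := inv_smul_smul _ _
    rw [h4] at h3
    calc dist (f' (f z)) z
        ≤ dist (f' (f z)) ((g (φ k))⁻¹ • (f z)) + dist ((g (φ k))⁻¹ • (f z)) z :=
          dist_triangle _ _ _
      _ < ε'/2 + ε'/2 := by rw [dist_comm (f' (f z))]; exact add_lt_add hk2 h3
      _ = ε' := by ring
  -- assemble the homeomorphism
  refine ⟨φ, hφ, ⟨⟨⇑f, ⇑f', hright, hleft⟩, f.continuous, f'.continuous⟩, ?_⟩
  have h5 : ∀ k, ((Homeomorph.smul (g (φ k)) : X ≃ₜ X) : C(X, X)) = Smap (g (φ k)) := by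
    intro k; rfl
  simp only [h5]
  exact hff

/-- For a countable group acting on a compact, locally connected, metrizable space with
Hausdorff orbit space, every sequence in `G` has a subsequence converging in the
compact-open topology to a homeomorphism of `X`. -/
theorem stmt17 {G X : Type*} [Group G] [Countable G] [TopologicalSpace X]
    [CompactSpace X] [LocallyConnectedSpace X] [TopologicalSpace.MetrizableSpace X]
    [MulAction G X] [ContinuousConstSMul G X]
    [T2Space (Quotient (MulAction.orbitRel G X))]
    (g : ℕ → G) :
    ∃ φ : ℕ → ℕ, StrictMono φ ∧ ∃ h : X ≃ₜ X,
      Filter.Tendsto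
        (fun k : ℕ => ((Homeomorph.smul (g (φ k)) : X ≃ₜ X) : C(X, X)))
        Filter.atTop (nhds (h : C(X, X))) := by
  letI : MetricSpace X := TopologicalSpace.metrizableSpaceMetric X
  exact part2 smul_equicontinuous' g
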